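/- arXiv:2012.01482 — 4 statements merged into one kernel-verified Lean document; each statement's English description precedes it below -/
import Mathlib

section
/- Let G and H be finite groups. If the commuting graph of G is isomorphic (as a simple graph) to the commuting graph of H, then Γ(G) = Γ(H); that is, the primes dividing |G| coincide with the primes dividing |H|, and for all distinct primes p and q, G contains an element of order pq if and only if H does. -/
/-- Two finite groups have the same Gruenberg–Kegel graph. -/
def gkEq (G : Type) [Group G] [Fintype G] (H : Type) [Group H] [Fintype H] : Prop :=
  (∀ p : ℕ, p.Prime → (p ∣ Fintype.card G ↔ p ∣ Fintype.card H)) ∧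
  ∀ p q : ℕ, p.Prime → q.Prime → p ≠ q →
    ((∃ g : G, orderOf g = p * q) ↔ (∃ h : H, orderOf h = p * q))

/-- The commuting graph of a group: distinct elements are adjacent iff they commute. -/
def commutingGraph (G : Type) [Group G] : SimpleGraph G where
  Adj a b := a ≠ b ∧ a * b = b * a
  symm := ⟨fun _ _ h => ⟨h.1.symm, h.2.symm⟩⟩
  loopless := ⟨fun _ h => h.1 rfl⟩

section Aux

variable {G : Type} [Group G]

lemma clique_commute {s : Set G} (hs : (commutingGraph G).IsClique s)
    {a b : G} (ha : a ∈ s) (hb : b ∈ s) : a * b = b * a := by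
  rcases eq_or_ne a b with rfl | hne
  · rfl
  · exact (hs ha hb hne).2

lemma mem_of_maximal_clique {s : Set G}
    (hs : Maximal (commutingGraph G).IsClique s) {x : G}
    (hx : ∀ y ∈ s, x * y = y * x) : x ∈ s := by
  have hclique : (commutingGraph G).IsClique (insert x s) := by
    intro a ha b hb hab
    rcases ha with rfl | ha
    · rcases hb with rfl | hb
      · exact absurd rfl hab
      · exact ⟨hab, hx b hb⟩
    · rcases hb with rfl | hb
      · exact ⟨hab, (hx a ha).symm⟩
      · exact ⟨hab, clique_commute hs.1 ha hb⟩
  exact hs.2 hclique (Set.subset_insert x s) (Set.mem_insert x s)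

/-- A maximal clique in the commuting graph is (the carrier of) a subgroup. -/
def cliqueSubgroup {s : Set G} (hs : Maximal (commutingGraph G).IsClique s) :
    Subgroup G where
  carrier := s
  one_mem' := mem_of_maximal_clique hs (fun y _ => by rw [one_mul, mul_one])
  mul_mem' := by
    intro a b ha hb
    refine mem_of_maximal_clique hs (fun y hy => ?_)
    have h1 := clique_commute hs.1 ha hy
    have h2 := clique_commute hs.1 hb hy
    calc a * b * y = a * (b * y) := by rw [mul_assoc]
      _ = a * (y * b) := by rw [h2]
      _ = a * y * b := by rw [mul_assoc]
      _ = y * a * b := by rw [h1]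
      _ = y * (a * b) := by rw [mul_assoc]
  inv_mem' := by
    intro a ha
    refine mem_of_maximal_clique hs (fun y hy => ?_)
    exact (Commute.inv_left (clique_commute hs.1 ha hy)).eq

lemma mem_cliqueSubgroup {s : Set G} (hs : Maximal (commutingGraph G).IsClique s)
    {x : G} : x ∈ cliqueSubgroup hs ↔ x ∈ s := Iff.rfl

/-- Characterization: an element of order `p*q` exists iff some maximal clique of the
commuting graph has cardinality divisible by `p*q`. -/
lemma exists_orderOf_iff_maximal_clique [Fintype G] {p q : ℕ}
    (hp : p.Prime) (hq : q.Prime) (hne : p ≠ q) :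
    (∃ g : G, orderOf g = p * q) ↔
      ∃ s : Set G, Maximal (commutingGraph G).IsClique s ∧ p * q ∣ Nat.card s := by
  constructor
  · rintro ⟨g, hg⟩
    have hclique : (commutingGraph G).IsClique (Subgroup.zpowers g : Set G) := by
      rintro a ha b hb hab
      refine ⟨hab, ?_⟩
      obtain ⟨m, rfl⟩ := Subgroup.mem_zpowers_iff.mp ha
      obtain ⟨n, rfl⟩ := Subgroup.mem_zpowers_iff.mp hb
      exact (Commute.zpow_zpow (Commute.refl g) m n).eq
    obtain ⟨s, hsub, hmax⟩ := Finite.exists_le_maximal hclique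
    refine ⟨s, hmax, ?_⟩
    have hgs : g ∈ cliqueSubgroup hmax := hsub (Subgroup.mem_zpowers g)
    have h1 : orderOf (⟨g, hgs⟩ : cliqueSubgroup hmax) = p * q := by
      rw [Subgroup.orderOf_mk, hg]
    have h2 := orderOf_dvd_natCard (G := cliqueSubgroup hmax) ⟨g, hgs⟩
    rw [h1] at h2
    exact h2
  · rintro ⟨s, hmax, hdvd⟩
    haveI : Fact p.Prime := ⟨hp⟩
    haveI : Fact q.Prime := ⟨hq⟩
    set S := cliqueSubgroup hmax with hS
    haveI : Fintype S := Fintype.ofFinite _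
    have hcard : Nat.card S = Nat.card s := rfl
    have hpdvd : p ∣ Fintype.card S := by
      rw [← Nat.card_eq_fintype_card, hcard]
      exact dvd_trans (Dvd.intro q rfl) hdvd
    have hqdvd : q ∣ Fintype.card S := by
      rw [← Nat.card_eq_fintype_card, hcard]
      exact dvd_trans (Dvd.intro_left p rfl) hdvd
    obtain ⟨a, ha⟩ := exists_prime_orderOf_dvd_card p hpdvd
    obtain ⟨b, hb⟩ := exists_prime_orderOf_dvd_card q hqdvd
    have hcomm : (a : G) * (b : G) = (b : G) * (a : G) :=
      clique_commute hmax.1 a.property b.property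
    have hcommS : Commute a b := Subtype.ext (by
      push_cast
      exact hcomm)
    refine ⟨((a * b : S) : G), ?_⟩
    have horder : orderOf (a * b) = p * q := by
      rw [Commute.orderOf_mul_eq_mul_orderOf_of_coprime hcommS]
      · rw [ha, hb]
      · rw [ha, hb]; exact (Nat.coprime_primes hp hq).mpr hne
    rw [Subgroup.orderOf_coe, horder]

/-- Images of maximal cliques under a graph isomorphism are maximal cliques. -/
lemma maximal_clique_image {G H : Type} [Group G] [Group H]
    (f : commutingGraph G ≃g commutingGraph H) {s : Set G}
    (hs : Maximal (commutingGraph G).IsClique s) :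
    Maximal (commutingGraph H).IsClique (f '' s) := by
  constructor
  · rintro _ ⟨a, ha, rfl⟩ _ ⟨b, hb, rfl⟩ hab
    have hne : a ≠ b := fun h => hab (by rw [h])
    exact f.map_adj_iff.mpr (hs.1 ha hb hne)
  · intro t ht hsub
    have hclique : (commutingGraph G).IsClique (f.symm '' t) := by
      rintro _ ⟨a, ha, rfl⟩ _ ⟨b, hb, rfl⟩ hab
      have hne : a ≠ b := fun h => hab (by rw [h])
      exact f.symm.map_adj_iff.mpr (ht ha hb hne)
    have hsub' : s ⊆ f.symm '' t := by
      intro x hx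
      exact ⟨f x, hsub ⟨x, hx, rfl⟩, f.toEquiv.symm_apply_apply x⟩
    have hts := hs.2 hclique hsub'
    intro y hy
    have hys : f.symm y ∈ s := hts ⟨y, hy, rfl⟩
    exact ⟨f.symm y, hys, f.toEquiv.apply_symm_apply y⟩

end Aux

/-- If the commuting graphs of two finite groups are isomorphic, then the groups have
the same Gruenberg–Kegel graph. -/
theorem gkEq_of_commutingGraph_iso
    (G : Type) [Group G] [Fintype G] (H : Type) [Group H] [Fintype H]
    (h : Nonempty (commutingGraph G ≃g commutingGraph H)) :
    gkEq G H := by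
  obtain ⟨f⟩ := h
  have hcard : Fintype.card G = Fintype.card H := Fintype.card_congr f.toEquiv
  constructor
  · intro p _
    rw [hcard]
  · intro p q hp hq hne
    rw [exists_orderOf_iff_maximal_clique hp hq hne,
        exists_orderOf_iff_maximal_clique hp hq hne]
    constructor
    · rintro ⟨s, hmax, hdvd⟩
      refine ⟨f '' s, maximal_clique_image f hmax, ?_⟩
      have hinj : Function.Injective ⇑f := f.toEquiv.injective
      rwa [Nat.card_image_of_injective hinj]
    · rintro ⟨s, hmax, hdvd⟩
      refine ⟨f.symm '' s, maximal_clique_image f.symm hmax, ?_⟩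
      have hinj : Function.Injective ⇑f.symm := f.symm.toEquiv.injective
      rwa [Nat.card_image_of_injective hinj]
end

section
/- Let G and H be finite groups. If the enhanced power graph of G is isomorphic (as a simple graph) to the enhanced power graph of H, then Γ(G) = Γ(H); that is, the primes dividing |G| coincide with the primes dividing |H|, and for all distinct primes p and q, G contains an element of order pq if and only if H does. -/
/-- The enhanced power graph of a group: distinct elements are adjacent iff together
they generate a cyclic subgroup. -/
def enhancedPowerGraph (G : Type) [Group G] : SimpleGraph G where
  Adj a b := a ≠ b ∧ IsCyclic (Subgroup.closure {a, b} : Subgroup G)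
  symm := by
    constructor
    intro a b h
    refine ⟨h.1.symm, ?_⟩
    rw [Set.pair_comm b a]
    exact h.2
  loopless := ⟨fun _ h => h.1 rfl⟩

/-- The closed neighborhood of a vertex. -/
def clN {V : Type} (Γ : SimpleGraph V) (x : V) : Set V := insert x (Γ.neighborSet x)

/-- The set of vertices whose closed neighborhood contains that of `x`. -/
def Kset {V : Type} (Γ : SimpleGraph V) (x : V) : Set V := {y | clN Γ x ⊆ clN Γ y}

lemma clN_map {V W : Type} {Γ : SimpleGraph V} {Γ' : SimpleGraph W} (φ : Γ ≃g Γ') (x : V) :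
    clN Γ' (φ x) = φ '' clN Γ x := by
  have himg : φ '' Γ.neighborSet x = Γ'.neighborSet (φ x) := by
    ext w
    constructor
    · rintro ⟨u, hu, rfl⟩
      exact φ.map_adj_iff.mpr hu
    · intro hw
      refine ⟨φ.symm w, ?_, φ.apply_symm_apply w⟩
      have : Γ'.Adj (φ x) (φ (φ.symm w)) := by rwa [φ.apply_symm_apply]
      exact φ.map_adj_iff.mp this
  rw [clN, clN, Set.image_insert_eq, himg]

lemma Kset_map {V W : Type} {Γ : SimpleGraph V} {Γ' : SimpleGraph W} (φ : Γ ≃g Γ') (x : V) :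
    Kset Γ' (φ x) = φ '' Kset Γ x := by
  ext y
  have hy : y = φ (φ.symm y) := (φ.apply_symm_apply y).symm
  constructor
  · intro h
    refine ⟨φ.symm y, ?_, φ.apply_symm_apply y⟩
    intro z hz
    have : (φ : V → W) z ∈ clN Γ' (φ x) := by
      rw [clN_map φ x]; exact ⟨z, hz, rfl⟩
    have h2 : (φ : V → W) z ∈ clN Γ' y := h this
    rw [hy, clN_map φ (φ.symm y)] at h2
    obtain ⟨u, hu, huz⟩ := h2
    rwa [← φ.toEquiv.injective huz]
  · rintro ⟨w, hw, rfl⟩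
    intro z hz
    rw [clN_map φ x] at hz
    obtain ⟨u, hu, rfl⟩ := hz
    rw [clN_map φ w]
    exact ⟨u, hw hu, rfl⟩

lemma isCyclic_zpowers {G : Type} [Group G] (x : G) : IsCyclic (Subgroup.zpowers x) := by
  refine ⟨⟨⟨x, Subgroup.mem_zpowers x⟩, ?_⟩⟩
  rintro ⟨y, hy⟩
  obtain ⟨n, hn⟩ := Subgroup.mem_zpowers_iff.mp hy
  exact ⟨n, Subtype.ext (by simpa using hn)⟩

lemma mem_clN_epg {G : Type} [Group G] {x z : G} :
    z ∈ clN (enhancedPowerGraph G) x ↔ IsCyclic (Subgroup.closure ({x, z} : Set G)) := by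
  constructor
  · rintro (rfl | h)
    · rw [Set.pair_eq_singleton, ← Subgroup.zpowers_eq_closure]
      exact isCyclic_zpowers z
    · exact h.2
  · intro h
    by_cases hz : z = x
    · exact Or.inl hz
    · exact Or.inr ⟨fun he => hz he.symm, h⟩

lemma exists_maxCyclic_ge {G : Type} [Group G] [Fintype G] (C : Subgroup G) (hC : IsCyclic C) :
    ∃ M : Subgroup G, Maximal (fun N : Subgroup G => IsCyclic N) M ∧ C ≤ M := by
  haveI : Finite (Subgroup G) :=
    Finite.of_injective (fun K : Subgroup G => (K : Set G)) SetLike.coe_injective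
  obtain ⟨M, hM, hmax⟩ := Set.Finite.exists_maximalFor id
    {N : Subgroup G | IsCyclic N ∧ C ≤ N} (Set.toFinite _) ⟨C, hC, le_rfl⟩
  refine ⟨M, ⟨hM.1, fun N hN hMN => ?_⟩, hM.2⟩
  exact hmax ⟨hN, hM.2.trans hMN⟩ hMN

lemma exists_zpowers_eq {G : Type} [Group G] (M : Subgroup G) (h : IsCyclic M) :
    ∃ m : G, m ∈ M ∧ M = Subgroup.zpowers m := by
  obtain ⟨⟨m, hm⟩, hgen⟩ := IsCyclic.exists_generator (α := M)
  refine ⟨m, hm, le_antisymm ?_ ?_⟩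
  · intro a ha
    obtain ⟨n, hn⟩ := Subgroup.mem_zpowers_iff.mp (hgen ⟨a, ha⟩)
    exact Subgroup.mem_zpowers_iff.mpr ⟨n, by simpa using congrArg Subtype.val hn⟩
  · exact Subgroup.zpowers_le.mpr hm

/-- The key structural lemma: `Kset` of the enhanced power graph at `x` is
the underlying set of a cyclic subgroup containing `x`. -/
lemma Kset_eq_cyclic_subgroup {G : Type} [Group G] [Fintype G] (x : G) :
    ∃ K : Subgroup G, IsCyclic K ∧ x ∈ K ∧ Kset (enhancedPowerGraph G) x = (K : Set G) := by
  set S : Set (Subgroup G) := {M | Maximal (fun N : Subgroup G => IsCyclic N) M ∧ x ∈ M} with hS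
  obtain ⟨M₀, hM₀max, hM₀le⟩ := exists_maxCyclic_ge (Subgroup.zpowers x) (isCyclic_zpowers x)
  have hM₀S : M₀ ∈ S := ⟨hM₀max, hM₀le (Subgroup.mem_zpowers x)⟩
  refine ⟨sInf S, ?_, ?_, ?_⟩
  · haveI : IsCyclic M₀ := hM₀max.1
    exact Subgroup.isCyclic_of_le (sInf_le hM₀S)
  · exact Subgroup.mem_sInf.mpr fun M hM => hM.2
  · ext y
    constructor
    · intro hy
      refine Subgroup.mem_sInf.mpr fun M hM => ?_
      obtain ⟨hMmax, hxM⟩ := hM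
      obtain ⟨m, hmM, hMz⟩ := exists_zpowers_eq M hMmax.1
      have hmclx : m ∈ clN (enhancedPowerGraph G) x := by
        rw [mem_clN_epg]
        haveI : IsCyclic M := hMmax.1
        refine Subgroup.isCyclic_of_le (H' := M) ?_
        rw [Subgroup.closure_le]
        rintro a (rfl | rfl) <;> assumption
      have hmcly := hy hmclx
      rw [mem_clN_epg] at hmcly
      have hMle : M ≤ Subgroup.closure ({y, m} : Set G) := by
        rw [hMz]
        exact Subgroup.zpowers_le.mpr (Subgroup.subset_closure (Or.inr rfl))
      have := hMmax.2 hmcly hMle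
      exact this (Subgroup.subset_closure (Or.inl rfl))
    · intro hy z hz
      rw [mem_clN_epg] at hz
      rw [mem_clN_epg]
      obtain ⟨M, hMmax, hle⟩ := exists_maxCyclic_ge _ hz
      have hxM : x ∈ M := hle (Subgroup.subset_closure (Or.inl rfl))
      have hzM : z ∈ M := hle (Subgroup.subset_closure (Or.inr rfl))
      have hyM : y ∈ M := by
        have : sInf S ≤ M := sInf_le ⟨hMmax, hxM⟩
        exact this hy
      haveI : IsCyclic M := hMmax.1
      refine Subgroup.isCyclic_of_le (H' := M) ?_
      rw [Subgroup.closure_le]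
      rintro a (rfl | rfl) <;> assumption

lemma orderOf_dvd_card_Kset {G : Type} [Group G] [Fintype G] (x : G) :
    orderOf x ∣ Nat.card (Kset (enhancedPowerGraph G) x) := by
  obtain ⟨K, hKcyc, hxK, hset⟩ := Kset_eq_cyclic_subgroup x
  rw [hset]
  have : orderOf (⟨x, hxK⟩ : K) ∣ Nat.card K := orderOf_dvd_natCard _
  rwa [← Subgroup.orderOf_coe] at this

lemma exists_orderOf_of_dvd_card_Kset {G : Type} [Group G] [Fintype G] (x : G) {n : ℕ}
    (hn : 0 < n) (h : n ∣ Nat.card (Kset (enhancedPowerGraph G) x)) : ∃ g : G, orderOf g = n := by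
  classical
  obtain ⟨K, hKcyc, hxK, hset⟩ := Kset_eq_cyclic_subgroup x
  rw [hset] at h
  have hdvd : n ∣ Fintype.card K := by
    rwa [← Nat.card_eq_fintype_card]
  have hcard := IsCyclic.card_orderOf_eq_totient (α := K) hdvd
  have hpos : 0 < (Finset.univ.filter (fun a : K => orderOf a = n)).card := by
    rw [hcard]
    exact Nat.totient_pos.mpr hn
  obtain ⟨a, ha⟩ := Finset.card_pos.mp hpos
  refine ⟨(a : G), ?_⟩
  rw [Subgroup.orderOf_coe]
  exact (Finset.mem_filter.mp ha).2

/-- If the enhanced power graphs of two finite groups are isomorphic, then the groups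
have the same Gruenberg–Kegel graph. -/
theorem gkEq_of_enhancedPowerGraph_iso
    (G : Type) [Group G] [Fintype G] (H : Type) [Group H] [Fintype H]
    (h : Nonempty (enhancedPowerGraph G ≃g enhancedPowerGraph H)) :
    gkEq G H := by
  obtain ⟨φ⟩ := h
  have hcardK : ∀ x : G, Nat.card (Kset (enhancedPowerGraph H) (φ x)) =
      Nat.card (Kset (enhancedPowerGraph G) x) := by
    intro x
    rw [Kset_map φ x]
    rw [Nat.card_coe_set_eq, Nat.card_coe_set_eq,
      Set.ncard_image_of_injective _ (RelIso.injective φ)]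
  have main : ∀ n : ℕ, 0 < n →
      ((∃ g : G, orderOf g = n) ↔ (∃ h : H, orderOf h = n)) := by
    intro n hn
    constructor
    · rintro ⟨g, rfl⟩
      refine exists_orderOf_of_dvd_card_Kset (φ g) hn ?_
      rw [hcardK g]
      exact orderOf_dvd_card_Kset g
    · rintro ⟨g, rfl⟩
      refine exists_orderOf_of_dvd_card_Kset (φ.symm g) hn ?_
      have := hcardK (φ.symm g)
      rw [φ.apply_symm_apply] at this
      rw [← this]
      exact orderOf_dvd_card_Kset g
  constructor
  · intro p _
    rw [Fintype.card_congr φ.toEquiv]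
  · intro p q hp hq _
    exact main (p * q) (Nat.mul_pos hp.pos hq.pos)
end

section
/- Let G be a finite group with a cyclic normal subgroup C such that the quotient G/C can be generated by k elements. Then the number of subgroups H of G with HC = G (supplements of C in G) is at most |C|^{k+1}. -/
/-- If `C` is a cyclic normal subgroup of a finite group `G` such that `G / C` can be
generated by `k` elements, then the number of supplements of `C` in `G` (subgroups `H`
with `H ⊔ C = G`) is at most `|C| ^ (k + 1)`. -/
theorem card_supplements_le
    (G : Type) [Group G] [Fintype G] (C : Subgroup G) [C.Normal]
    (hcyc : IsCyclic C) (k : ℕ)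
    (hgen : ∃ s : Finset (G ⧸ C), s.card ≤ k ∧
      Subgroup.closure (s : Set (G ⧸ C)) = ⊤) :
    Set.ncard {H : Subgroup G | H ⊔ C = ⊤} ≤ Nat.card C ^ (k + 1) := by
  classical
  obtain ⟨s, hsk, hscl⟩ := hgen
  set π : G →* G ⧸ C := QuotientGroup.mk' C with hπ
  -- the encoding map
  set f : C × (↥s → C) → Subgroup G := fun p =>
    Subgroup.closure ({(p.1 : G)} ∪ Set.range fun a : ↥s =>
      Quotient.out (a : G ⧸ C) * (p.2 a : G)) with hf
  have hsub : {H : Subgroup G | H ⊔ C = ⊤} ⊆ Set.range f := by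
    rintro H (hH : H ⊔ C = ⊤)
    -- image of H in the quotient is everything
    have hmapC : C.map π = ⊥ := by
      rw [eq_bot_iff]
      rintro x ⟨c, hc, rfl⟩
      simpa [hπ, QuotientGroup.eq_one_iff] using hc
    have hmapH : H.map π = ⊤ := by
      have := congrArg (Subgroup.map π) hH
      rw [Subgroup.map_sup, hmapC, sup_bot_eq] at this
      rw [this]
      exact Subgroup.map_top_of_surjective π (QuotientGroup.mk'_surjective C)
    -- generator of H ⊓ C
    haveI : IsCyclic ((H ⊓ C).subgroupOf C) := Subgroup.isCyclic _
    obtain ⟨c, hc⟩ := IsCyclic.exists_generator (α := ((H ⊓ C).subgroupOf C))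
    have hcHC : ((c : C) : G) ∈ H ⊓ C := c.2
    have hinf : ∀ x ∈ H ⊓ C, x ∈ Subgroup.zpowers ((c : C) : G) := by
      intro x hx
      have hxC : x ∈ C := hx.2
      obtain ⟨n, hn⟩ := hc ⟨⟨x, hxC⟩, hx⟩
      refine ⟨n, ?_⟩
      have := congrArg (fun y : ((H ⊓ C).subgroupOf C) => ((y : C) : G)) hn
      simpa using this
    -- lifts of elements of s inside H
    have hlift : ∀ a : ↥s, ∃ h ∈ H, π h = (a : G ⧸ C) := by
      intro a
      have : (a : G ⧸ C) ∈ H.map π := hmapH ▸ Subgroup.mem_top _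
      obtain ⟨h, hh, hh'⟩ := this
      exact ⟨h, hh, hh'⟩
    choose h hhH hhπ using hlift
    have houtπ : ∀ a : ↥s, π (Quotient.out (a : G ⧸ C)) = (a : G ⧸ C) := fun a =>
      QuotientGroup.out_eq' (a : G ⧸ C)
    have hvC : ∀ a : ↥s, (Quotient.out (a : G ⧸ C))⁻¹ * h a ∈ C := by
      intro a
      have h1 : π ((Quotient.out (a : G ⧸ C))⁻¹ * h a) = 1 := by
        rw [map_mul, map_inv, hhπ, houtπ, inv_mul_cancel]
      rwa [hπ, ← MonoidHom.mem_ker, QuotientGroup.ker_mk'] at h1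
    set p : C × (↥s → C) := ⟨(c : C), fun a => ⟨_, hvC a⟩⟩ with hp
    refine ⟨p, ?_⟩
    have hgen_eq : ∀ a : ↥s,
        Quotient.out (a : G ⧸ C) * ((Quotient.out (a : G ⧸ C))⁻¹ * h a) = h a := by
      intro a; group
    have hKle : f p ≤ H := by
      rw [hf]
      refine (Subgroup.closure_le H).2 ?_
      rintro x (rfl | ⟨a, rfl⟩)
      · exact hcHC.1
      · simpa [hp, hgen_eq a] using hhH a
    -- f p maps onto the quotient
    have hmapK : (f p).map π = ⊤ := by
      rw [hf, MonoidHom.map_closure]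
      rw [eq_top_iff, ← hscl]
      refine Subgroup.closure_le _ |>.2 ?_
      intro x hx
      refine Subgroup.subset_closure ⟨Quotient.out x * ((p.2 ⟨x, hx⟩ : C) : G),
        Or.inr ⟨⟨x, hx⟩, rfl⟩, ?_⟩
      have h2 : π ((p.2 ⟨x, hx⟩ : C) : G) = 1 :=
        (QuotientGroup.eq_one_iff _).mpr (p.2 ⟨x, hx⟩).2
      rw [map_mul, h2, mul_one]
      exact houtπ ⟨x, hx⟩
    -- finally, f p = H
    refine le_antisymm hKle ?_
    intro x hx
    have : π x ∈ (f p).map π := hmapK ▸ Subgroup.mem_top _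
    obtain ⟨y, hyK, hyπ⟩ := this
    have hyx : y⁻¹ * x ∈ H ⊓ C := by
      constructor
      · exact H.mul_mem (H.inv_mem (hKle hyK)) hx
      · have h1 : π (y⁻¹ * x) = 1 := by rw [map_mul, map_inv, hyπ, inv_mul_cancel]
        rwa [hπ, ← MonoidHom.mem_ker, QuotientGroup.ker_mk'] at h1
    have hcK : ((c : C) : G) ∈ f p := Subgroup.subset_closure (Or.inl rfl)
    have hzK : y⁻¹ * x ∈ f p :=
      (Subgroup.zpowers_le.2 hcK) (hinf _ hyx)
    have := (f p).mul_mem hyK hzK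
    simpa using this
  -- counting
  have h1 : Set.ncard {H : Subgroup G | H ⊔ C = ⊤} ≤ Nat.card (C × (↥s → C)) := by
    calc Set.ncard {H : Subgroup G | H ⊔ C = ⊤} ≤ (Set.range f).ncard :=
          Set.ncard_le_ncard hsub (Set.finite_range f)
      _ = (f '' Set.univ).ncard := by rw [Set.image_univ]
      _ ≤ (Set.univ : Set (C × (↥s → C))).ncard := Set.ncard_image_le Set.finite_univ
      _ = Nat.card (C × (↥s → C)) := Set.ncard_univ _
  have hCpos : 1 ≤ Nat.card C := Nat.one_le_iff_ne_zero.2 Nat.card_pos.ne'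
  have h2 : Nat.card (C × (↥s → C)) = Nat.card C * Nat.card C ^ s.card := by
    rw [Nat.card_prod, Nat.card_fun, Nat.card_eq_finsetCard]
  refine h1.trans ?_
  rw [h2, pow_succ]
  have h3 : Nat.card C ^ s.card ≤ Nat.card C ^ k := Nat.pow_le_pow_right hCpos hsk
  calc Nat.card C * Nat.card C ^ s.card ≤ Nat.card C * Nat.card C ^ k :=
        Nat.mul_le_mul_left _ h3
    _ = Nat.card C ^ k * Nat.card C := Nat.mul_comm _ _
end

section
/- Let G be a finite group. If there exist three pairwise distinct primes p, q, r dividing |G| such that G contains no element of order pq, no element of order pr, and no element of order qr, then G is not solvable. -/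
open Subgroup Finset

section Helpers
variable {K : Type*} [Group K]


section Helpers

variable {K : Type*} [Group K]

/-- From a nontrivial element of `a`-power order, extract an element of order exactly `a`. -/
lemma exists_pow_orderOf_eq_prime {a : ℕ} (ha : a.Prime) {v : K} (hv : v ≠ 1)
    {k : ℕ} (hvk : v ^ a ^ k = 1) : ∃ n : ℕ, orderOf (v ^ n) = a := by
  have h1 : orderOf v ∣ a ^ k := orderOf_dvd_of_pow_eq_one hvk
  obtain ⟨t, ht, hdvd⟩ := (Nat.dvd_prime_pow ha).mp h1
  have ht0 : t ≠ 0 := by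
    rintro rfl
    simp at hdvd
    exact hv hdvd
  refine ⟨a ^ (t - 1), ?_⟩
  rw [orderOf_pow_of_dvd (pow_ne_zero _ ha.ne_zero) (hdvd ▸ pow_dvd_pow a (Nat.sub_le t 1)), hdvd,
    Nat.pow_div (Nat.sub_le t 1) ha.pos, Nat.sub_sub_self (Nat.one_le_iff_ne_zero.mpr ht0),
    pow_one]

/-- If `v` has `a`-power order, `w` has `b`-power order (nontrivially), they commute,
then there is an element of order `a * b`. -/
lemma exists_orderOf_eq_mul_of_commute {a b : ℕ} (ha : a.Prime) (hb : b.Prime) (hab : a ≠ b)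
    {v w : K} (hv : v ≠ 1) (hw : w ≠ 1) {k l : ℕ} (hvk : v ^ a ^ k = 1) (hwl : w ^ b ^ l = 1)
    (hcomm : Commute v w) : ∃ g : K, orderOf g = a * b := by
  obtain ⟨n, hn⟩ := exists_pow_orderOf_eq_prime ha hv hvk
  obtain ⟨m, hm⟩ := exists_pow_orderOf_eq_prime hb hw hwl
  refine ⟨v ^ n * w ^ m, ?_⟩
  have hc : Commute (v ^ n) (w ^ m) := (hcomm.pow_pow n m)
  rw [hc.orderOf_mul_eq_mul_orderOf_of_coprime (by rw [hn, hm]; exact (Nat.coprime_primes ha hb).mpr hab), hn, hm]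

end Helpers

variable {K : Type*} [Group K]


/-- A nontrivial solvable group has a nontrivial abelian normal subgroup. -/
lemma exists_abelian_normal [hs : Group.IsSolvable K] (hK : (⊤ : Subgroup K) ≠ ⊥) :
    ∃ A : Subgroup K, A.Normal ∧ A ≠ ⊥ ∧ ∀ x ∈ A, ∀ y ∈ A, x * y = y * x := by
  obtain ⟨n, hn⟩ := hs.solvable
  -- find minimal n with derivedSeries K n = ⊥
  have h0 : derivedSeries K 0 ≠ ⊥ := hK
  -- take the largest m with derivedSeries K m ≠ ⊥
  obtain ⟨m, hm, hm1⟩ : ∃ m, derivedSeries K m ≠ ⊥ ∧ derivedSeries K (m + 1) = ⊥ := by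
    induction n with
    | zero => exact absurd hn h0
    | succ n ih =>
      by_cases h : derivedSeries K n = ⊥
      · exact ih h
      · exact ⟨n, h, hn⟩
  refine ⟨derivedSeries K m, derivedSeries_normal K m, hm, ?_⟩
  intro x hx y hy
  open scoped commutatorElement in
  have : ⁅x, y⁆ ∈ derivedSeries K (m + 1) := commutator_mem_commutator hx hy
  rw [hm1, Subgroup.mem_bot, commutatorElement_eq_one_iff_mul_comm] at this
  exact this

/-- The `u`-torsion subgroup of an abelian normal subgroup, as a normal subgroup of `K`. -/
def torsionPart (A : Subgroup K) (hA : ∀ x ∈ A, ∀ y ∈ A, x * y = y * x) (u : ℕ) : Subgroup K where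
  carrier := {x | x ∈ A ∧ ∃ k : ℕ, x ^ u ^ k = 1}
  one_mem' := ⟨A.one_mem, 0, one_pow _⟩
  mul_mem' := by
    rintro x y ⟨hx, k, hk⟩ ⟨hy, l, hl⟩
    refine ⟨A.mul_mem hx hy, k + l, ?_⟩
    have hcomm : Commute x y := hA x hx y hy
    rw [hcomm.mul_pow, pow_add, pow_mul, hk, one_pow, one_mul, mul_comm (u^k), pow_mul, hl, one_pow]
  inv_mem' := by
    rintro x ⟨hx, k, hk⟩
    exact ⟨A.inv_mem hx, k, by rw [inv_pow, hk, inv_one]⟩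

lemma torsionPart_normal (A : Subgroup K) [hn : A.Normal] (hA : ∀ x ∈ A, ∀ y ∈ A, x * y = y * x)
    (u : ℕ) : (torsionPart A hA u).Normal := by
  constructor
  rintro x ⟨hx, k, hk⟩ g
  refine ⟨hn.conj_mem x hx g, k, ?_⟩
  have : (g * x * g⁻¹) ^ u ^ k = g * x ^ u ^ k * g⁻¹ := by
    induction (u ^ k) with
    | zero => simp
    | succ n ih => rw [pow_succ, ih, pow_succ]; group
  rw [this, hk, mul_one, mul_inv_cancel]

lemma torsionPart_ne_bot (A : Subgroup K) (hA : ∀ x ∈ A, ∀ y ∈ A, x * y = y * x)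
    {u : ℕ} (hu : u.Prime) [Fintype K] (hdvd : u ∣ Nat.card A) :
    torsionPart A hA u ≠ ⊥ := by
  haveI := Fact.mk hu
  obtain ⟨⟨x, hxA⟩, hx⟩ := exists_prime_orderOf_dvd_card' (G := A) u hdvd
  have hx1 : x ≠ 1 := by
    intro h
    subst h
    rw [show (⟨1, hxA⟩ : A) = 1 from rfl, orderOf_one] at hx
    exact hu.one_lt.ne' hx.symm
  intro hbot
  have : x ∈ torsionPart A hA u := by
    refine ⟨hxA, 1, ?_⟩
    have : (⟨x, hxA⟩ : A) ^ u = 1 := by rw [← hx]; exact pow_orderOf_eq_one _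
    have := congrArg (Subgroup.subtype A) this
    simpa [pow_one] using this
  rw [hbot, Subgroup.mem_bot] at this
  exact hx1 this

end Helpers

/-- P. Hall's theorem: existence of Hall `π`-subgroups in finite solvable groups. -/
theorem hall_solvable (π : ℕ → Prop) (n : ℕ) : ∀ (K : Type) (_ : Group K) (_ : Fintype K)
    (_ : Group.IsSolvable K), Nat.card K = n →
    ∃ W : Subgroup K, (∀ t : ℕ, t.Prime → t ∣ Nat.card W → π t) ∧
      (∀ t : ℕ, t.Prime → π t → ¬ t ∣ W.index) := by
  induction n using Nat.strong_induction_on with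
  | _ n ih =>
    intro K _ _ _ hcard
    by_cases htriv : (⊤ : Subgroup K) = ⊥
    · refine ⟨⊥, ?_, ?_⟩
      · intro t ht hdvd
        rw [show Nat.card (⊥ : Subgroup K) = 1 by simp] at hdvd
        exact absurd (Nat.le_of_dvd one_pos hdvd) (not_le.mpr ht.one_lt)
      · intro t ht _ hdvd
        have h1 : Nat.card K = 1 := by
          have : ∀ x : K, x = 1 := fun x => by
            have : x ∈ (⊥ : Subgroup K) := htriv ▸ mem_top x
            simpa using this
          exact Nat.card_eq_one_iff_exists.mpr ⟨1, fun x => this x⟩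
        have : (⊥ : Subgroup K).index ∣ Nat.card K := index_dvd_card _
        rw [h1, Nat.dvd_one] at this
        rw [this, Nat.dvd_one] at hdvd
        exact ht.one_lt.ne' hdvd
    -- nontrivial case
    obtain ⟨A, hAnorm, hAbot, hAcomm⟩ := exists_abelian_normal htriv
    have hA1 : 1 < Nat.card A := by
      rcases Nat.lt_or_ge 1 (Nat.card A) with h | h
      · exact h
      · exfalso; apply hAbot
        interval_cases h' : (Nat.card A)
        · exact absurd h' (Nat.card_pos).ne'
        · exact (Subgroup.eq_bot_iff_card (H := A)).mpr (by rw [h'])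
    set u := (Nat.card A).minFac with hu_def
    have hu : u.Prime := Nat.minFac_prime (by omega)
    haveI := Fact.mk hu
    set N := torsionPart A hAcomm u with hN_def
    haveI hNnorm : N.Normal := torsionPart_normal A hAcomm u
    have hNbot : N ≠ ⊥ := torsionPart_ne_bot A hAcomm hu (Nat.minFac_dvd _)
    have hNp : IsPGroup u N := fun g => by
      obtain ⟨hgA, k, hk⟩ := g.2
      exact ⟨k, Subtype.ext (by simpa using hk)⟩
    obtain ⟨α, hα⟩ := hNp.exists_card_eq
    have hN1 : 1 < Nat.card N := by
      rcases Nat.lt_or_ge 1 (Nat.card N) with h | h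
      · exact h
      · exfalso; apply hNbot
        interval_cases h' : (Nat.card N)
        · exact absurd h' (Nat.card_pos).ne'
        · exact (Subgroup.eq_bot_iff_card (H := N)).mpr (by rw [h'])
    haveI : Fintype (K ⧸ N) := Fintype.ofFinite _
    have hQlt : Nat.card (K ⧸ N) < n := by
      have hmul : Nat.card N * N.index = Nat.card K := card_mul_index N
      rw [index_eq_card] at hmul
      have : Nat.card (K ⧸ N) ≠ 0 := Nat.card_pos.ne'
      nlinarith [Nat.card_pos (α := K ⧸ N), hcard ▸ hmul]
    obtain ⟨W', hW'1, hW'2⟩ := ih _ hQlt (K ⧸ N) inferInstance inferInstance inferInstance rfl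
    set L := comap (QuotientGroup.mk' N) W' with hL_def
    have hLindex : L.index = W'.index := index_comap_of_surjective _ (QuotientGroup.mk'_surjective N)
    have hindW'0 : W'.index ≠ 0 := index_ne_zero_of_finite
    have hLcard : Nat.card L = Nat.card N * Nat.card W' := by
      have h1 : Nat.card L * L.index = Nat.card K := card_mul_index L
      have h2 : Nat.card W' * W'.index = Nat.card (K ⧸ N) := card_mul_index W'
      have h3 : Nat.card N * Nat.card (K ⧸ N) = Nat.card K := by
        have := card_mul_index N; rwa [index_eq_card] at this
      rw [hLindex] at h1
      have : Nat.card L * W'.index = (Nat.card N * Nat.card W') * W'.index := by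
        rw [mul_assoc, h2, h3, h1]
      exact Nat.eq_of_mul_eq_mul_right (Nat.pos_of_ne_zero hindW'0) this
    by_cases hπu : π u
    · refine ⟨L, ?_, ?_⟩
      · intro t ht hdvd
        rw [hLcard, hα] at hdvd
        rcases ht.dvd_mul.mp hdvd with h | h
        · have : t = u := (Nat.prime_dvd_prime_iff_eq ht hu).mp (ht.dvd_of_dvd_pow h)
          rwa [this]
        · exact hW'1 t ht h
      · intro t ht hπt
        rw [hLindex]
        exact hW'2 t ht hπt
    · by_cases hLlt : Nat.card L < n
      · haveI : Fintype L := Fintype.ofFinite _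
        obtain ⟨W'', h1, h2⟩ := ih _ hLlt L inferInstance inferInstance inferInstance rfl
        refine ⟨W''.map L.subtype, ?_, ?_⟩
        · intro t ht hdvd
          rw [Nat.card_congr (Subgroup.equivMapOfInjective W'' L.subtype L.subtype_injective).toEquiv.symm] at hdvd
          exact h1 t ht hdvd
        · intro t ht hπt
          rw [Subgroup.index_map_subtype]
          rw [ht.dvd_mul]
          push_neg
          exact ⟨h2 t ht hπt, hLindex ▸ hW'2 t ht hπt⟩
      · -- L = everything; N is a normal Hall π'-subgroup, apply Schur-Zassenhaus
        have hLn : Nat.card L = n := le_antisymm (hcard ▸ Nat.le_of_dvd (hcard ▸ Nat.card_pos) (card_subgroup_dvd_card L)) (not_lt.mp hLlt)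
        have hn0 : n ≠ 0 := by rw [← hcard]; exact Nat.card_pos.ne'
        have hWidx1 : W'.index = 1 := by
          have h1 : Nat.card L * L.index = Nat.card K := card_mul_index L
          rw [hLn, hcard, hLindex] at h1
          exact Nat.eq_of_mul_eq_mul_left (Nat.pos_of_ne_zero hn0) (h1.trans (mul_one n).symm)
        have h2 : Nat.card W' * W'.index = Nat.card (K ⧸ N) := card_mul_index W'
        rw [hWidx1, mul_one] at h2
        have hcop : Nat.Coprime (Nat.card N) N.index := by
          rw [hα, index_eq_card]
          apply Nat.Coprime.pow_left
          rw [Nat.Prime.coprime_iff_not_dvd hu]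
          intro hdvd
          exact hπu (hW'1 u hu (h2 ▸ hdvd))
        obtain ⟨W, hW⟩ := Subgroup.exists_right_complement'_of_coprime hcop
        have hcards : Nat.card N * Nat.card W = Nat.card K := hW.card_mul
        have h3 : Nat.card N * Nat.card (K ⧸ N) = Nat.card K := by
          have := card_mul_index N; rwa [index_eq_card] at this
        have hWQ : Nat.card W = Nat.card (K ⧸ N) :=
          Nat.eq_of_mul_eq_mul_left Nat.card_pos (hcards.trans h3.symm)
        refine ⟨W, ?_, ?_⟩
        · intro t ht hdvd
          exact hW'1 t ht (by rw [h2, ← hWQ]; exact hdvd)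
        · intro t ht hπt hdvd
          have h1 : Nat.card W * W.index = Nat.card K := card_mul_index W
          have hiW : W.index = Nat.card N := by
            have h4 : Nat.card W * W.index = Nat.card W * Nat.card N := by
              rw [h1, ← hcards, mul_comm]
            exact Nat.eq_of_mul_eq_mul_left Nat.card_pos h4
          rw [hiW, hα] at hdvd
          have : t = u := (Nat.prime_dvd_prime_iff_eq ht hu).mp (ht.dvd_of_dvd_pow hdvd)
          exact hπu (this ▸ hπt)

/-- Iterated conjugation: if `y * m = m ^ s * y` then `y ^ j * m ^ i = m ^ (i * s ^ j) * y ^ j`. -/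
lemma conj_pow_comm {H : Type*} [Group H] (m y : H) (s : ℕ) (hconj : y * m = m ^ s * y) :
    ∀ j i : ℕ, y ^ j * m ^ i = m ^ (i * s ^ j) * y ^ j := by
  have hcomm1 : ∀ i : ℕ, y * m ^ i = m ^ (i * s) * y := by
    intro i
    induction i with
    | zero => simp
    | succ i ih =>
      rw [pow_succ, ← mul_assoc, ih, mul_assoc, hconj, ← mul_assoc, ← pow_add]
      rw [show i * s + s = (i + 1) * s by ring]
  intro j
  induction j with
  | zero => simp
  | succ j ih =>
    intro i
    rw [pow_succ, mul_assoc, hcomm1 i, ← mul_assoc, ih, mul_assoc, ← pow_succ]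
    rw [show i * s * s ^ j = i * s ^ (j + 1) by ring]

/-- Power formula: if `y * m = m ^ s * y` then `(m ^ i * y) ^ j = m ^ (i * (1+s+...+s^(j-1))) * y ^ j`. -/
lemma conj_pow_formula {H : Type*} [Group H] (m y : H) (s : ℕ) (hconj : y * m = m ^ s * y) :
    ∀ i j : ℕ, (m ^ i * y) ^ j = m ^ (i * ∑ t ∈ Finset.range j, s ^ t) * y ^ j := by
  intro i j
  induction j with
  | zero => simp
  | succ j ih =>
    rw [pow_succ, ih, mul_assoc, ← mul_assoc (y ^ j), conj_pow_comm m y s hconj j i, mul_assoc,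
      ← pow_succ, ← mul_assoc, ← pow_add]
    congr 2
    rw [Finset.sum_range_succ]
    ring

/-- The key counting argument: if `m` has prime order `b`, `y` normalizes `⟨m⟩` with
`y * m = m ^ s * y`, `y ^ c = 1`, the geometric sums `e j = ∑ s^t` are nonzero mod `b`
for `0 < j < c` and zero for `j = c`, and `m` and all `m ^ i * y` act fixed-point-freely
on an abelian group `V`, then `v ^ b = 1` for every `v`. -/
lemma grand_product {H V : Type*} [Group H] [CommGroup V]
    (ρ : H → V → V)
    (hρ_mul : ∀ g h v, ρ g (ρ h v) = ρ (g * h) v)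
    (hρ_one : ∀ v, ρ 1 v = v)
    (hρ_hom : ∀ g v w, ρ g (v * w) = ρ g v * ρ g w)
    (b : ℕ) (hb : b.Prime) (m y : H) (hm : orderOf m = b)
    (c s : ℕ) (hc : 0 < c) (hyc : y ^ c = 1)
    (hconj : y * m = m ^ s * y)
    (hec : b ∣ ∑ t ∈ Finset.range c, s ^ t)
    (hej : ∀ j, 0 < j → j < c → ¬ (b ∣ ∑ t ∈ Finset.range j, s ^ t))
    (hfpf_m : ∀ v : V, ρ m v = v → v = 1)
    (hfpf_z : ∀ i : ℕ, ∀ v : V, ρ (m ^ i * y) v = v → v = 1)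
    (v : V) : v ^ b = 1 := by
  haveI : Fact b.Prime := ⟨hb⟩
  haveI : NeZero b := ⟨hb.ne_zero⟩
  haveI : Fact (1 < b) := ⟨hb.one_lt⟩
  -- the action as a monoid hom on V
  have hρ1 : ∀ g, ρ g 1 = 1 := by
    intro g
    have := hρ_hom g 1 1
    rw [mul_one] at this
    exact left_eq_mul.mp this
  have hρ_prod : ∀ (g : H) {ι : Type} (t : Finset ι) (f : ι → V),
      ρ g (∏ i ∈ t, f i) = ∏ i ∈ t, ρ g (f i) := by
    intro g ι t f
    classical
    induction t using Finset.induction with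
    | empty => simpa using hρ1 g
    | insert _ _ hx ih => rw [Finset.prod_insert hx, Finset.prod_insert hx, hρ_hom, ih]
  set e : ℕ → ℕ := fun j => ∑ t ∈ Finset.range j, s ^ t with he_def
  -- powers of m indexed by ZMod b
  set P : ZMod b → H := fun x => m ^ x.val with hP_def
  have hP_pow : ∀ k : ℕ, m ^ k = P (k : ZMod b) := by
    intro k
    rw [hP_def]
    simp only []
    rw [ZMod.val_natCast, ← hm, pow_mod_orderOf]
  have hmP : ∀ i : ZMod b, m * P i = P (1 + i) := by
    intro i
    have : m * P i = m ^ (1 + i.val) := by rw [pow_add, pow_one]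
    rw [this, hP_pow, Nat.cast_add, Nat.cast_one, ZMod.natCast_zmod_val]
  have hzpow : ∀ i j : ℕ, (m ^ i * y) ^ j = m ^ (i * e j) * y ^ j := fun i j =>
    conj_pow_formula m y s hconj i j
  -- z_i ^ c = 1
  have hzc : ∀ i : ℕ, (m ^ i * y) ^ c = 1 := by
    intro i
    rw [hzpow, hyc, mul_one]
    exact orderOf_dvd_iff_pow_eq_one.mp (by rw [hm]; exact hec.mul_left i)
  -- products over a full cycle are fixed
  have hshift : ∀ (z : H) (N : ℕ), z ^ N = 1 →
      ρ z (∏ j ∈ range N, ρ (z ^ j) v) = ∏ j ∈ range N, ρ (z ^ j) v := by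
    intro z N hz
    rw [hρ_prod]
    have hterm : ∀ j, ρ z (ρ (z ^ j) v) = ρ (z ^ (j + 1)) v := fun j => by
      rw [hρ_mul, ← pow_succ']
    simp_rw [hterm]
    set f : ℕ → V := fun j => ρ (z ^ j) v with hf
    have hfN : f N = f 0 := by rw [hf]; simp [hz]
    have h1 : ∏ j ∈ range (N + 1), f j = (∏ j ∈ range N, f (j + 1)) * f 0 :=
      Finset.prod_range_succ' f N
    have h2 : ∏ j ∈ range (N + 1), f j = (∏ j ∈ range N, f j) * f N :=
      Finset.prod_range_succ f N
    have h3 := h1.symm.trans h2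
    rw [hfN] at h3
    exact mul_right_cancel h3
  have hSi : ∀ i : ℕ, ∏ j ∈ range c, ρ ((m ^ i * y) ^ j) v = 1 := fun i =>
    hfpf_z i _ (hshift (m ^ i * y) c (hzc i))
  have hIco : ∀ i : ℕ, ∏ j ∈ Finset.Ico 1 c, ρ ((m ^ i * y) ^ j) v = v⁻¹ := by
    intro i
    have h0 : ∏ j ∈ range c, ρ ((m ^ i * y) ^ j) v
        = ρ ((m ^ i * y) ^ 0) v * ∏ j ∈ Finset.Ico 1 c, ρ ((m ^ i * y) ^ j) v := by
      rw [Finset.range_eq_Ico]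
      exact Finset.prod_eq_prod_Ico_succ_bot hc _
    rw [hSi i, pow_zero, hρ_one] at h0
    exact (eq_inv_of_mul_eq_one_right h0.symm)
  -- column 0 is trivial
  have hT0 : ∏ i : ZMod b, ρ (P i) v = 1 := by
    apply hfpf_m
    rw [hρ_prod]
    have hterm : ∀ i : ZMod b, ρ m (ρ (P i) v) = ρ (P (1 + i)) v := fun i => by
      rw [hρ_mul, hmP]
    simp_rw [hterm]
    exact Fintype.prod_equiv (Equiv.addLeft (1 : ZMod b)) _ _ (fun i => rfl)
  -- the grand product is trivial
  have hGv1 : ∏ i : ZMod b, ∏ j ∈ range c, ρ (P i * y ^ j) v = 1 := by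
    apply hfpf_m
    rw [hρ_prod]
    have hterm : ∀ i : ZMod b, ρ m (∏ j ∈ range c, ρ (P i * y ^ j) v)
        = ∏ j ∈ range c, ρ (P (1 + i) * y ^ j) v := by
      intro i
      rw [hρ_prod]
      refine Finset.prod_congr rfl (fun j _ => ?_)
      rw [hρ_mul, ← mul_assoc, hmP]
    simp_rw [hterm]
    exact Fintype.prod_equiv (Equiv.addLeft (1 : ZMod b)) _ _ (fun i => rfl)
  have hswap : ∏ i : ZMod b, ∏ j ∈ range c, ρ (P i * y ^ j) v
      = ∏ j ∈ range c, ∏ i : ZMod b, ρ (P i * y ^ j) v := Finset.prod_comm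
  -- nontrivial columns
  have hcol : ∀ j, 0 < j → j < c → ∏ i : ZMod b, ρ (P i * y ^ j) v
      = ∏ i : ZMod b, ρ ((P i * y) ^ j) v := by
    intro j hj1 hj2
    have hne : ((e j : ℕ) : ZMod b) ≠ 0 := by
      rw [Ne, ZMod.natCast_eq_zero_iff]
      exact hej j hj1 hj2
    have hkey : ∀ i : ZMod b, (P i * y) ^ j = P (i * ((e j : ℕ) : ZMod b)) * y ^ j := by
      intro i
      have h1 : (m ^ i.val * y) ^ j = m ^ (i.val * e j) * y ^ j := hzpow i.val j
      have h2 : m ^ (i.val * e j) = P (((i.val * e j : ℕ)) : ZMod b) := hP_pow _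
      have h3 : (((i.val * e j : ℕ)) : ZMod b) = i * ((e j : ℕ) : ZMod b) := by
        push_cast [ZMod.natCast_zmod_val]
        ring
      calc (P i * y) ^ j = (m ^ i.val * y) ^ j := rfl
        _ = m ^ (i.val * e j) * y ^ j := h1
        _ = P (i * ((e j : ℕ) : ZMod b)) * y ^ j := by rw [h2, h3]
    calc ∏ i : ZMod b, ρ (P i * y ^ j) v
        = ∏ i : ZMod b, ρ (P (i * ((e j : ℕ) : ZMod b)) * y ^ j) v :=
          (Fintype.prod_equiv (Equiv.mulRight₀ ((e j : ℕ) : ZMod b) hne) _ _ (fun i => rfl)).symm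
      _ = ∏ i : ZMod b, ρ ((P i * y) ^ j) v :=
          Finset.prod_congr rfl (fun i _ => by rw [hkey])
  -- final computation
  have hfinal : ∏ j ∈ range c, ∏ i : ZMod b, ρ (P i * y ^ j) v = v⁻¹ ^ b := by
    rw [Finset.range_eq_Ico, Finset.prod_eq_prod_Ico_succ_bot hc]
    have h00 : ∏ i : ZMod b, ρ (P i * y ^ 0) v = 1 := by
      simpa [pow_zero, mul_one] using hT0
    rw [h00, one_mul]
    rw [Finset.prod_congr rfl (fun j hj => by
      obtain ⟨hj1, hj2⟩ := Finset.mem_Ico.mp hj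
      exact hcol j hj1 hj2)]
    rw [Finset.prod_comm]
    rw [Finset.prod_congr rfl (fun (i : ZMod b) _ => hIco i.val)]
    rw [Finset.prod_const, Finset.card_univ, ZMod.card]
  have hend := hGv1
  rw [hswap, hfinal, inv_pow] at hend
  exact inv_eq_one.mp hend

/-- Applying the grand product argument inside a group `K`. -/
lemma grand_apply {K : Type*} [Group K] (a bG cG : ℕ) (ha : a.Prime) (hb : bG.Prime)
    (hcp : cG.Prime) (hab : a ≠ bG) (hac : a ≠ cG)
    (V : Subgroup K) (hnorm : V.Normal)
    (hVcomm : ∀ x ∈ V, ∀ y ∈ V, x * y = y * x)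
    (hVtor : ∀ v ∈ V, ∃ k : ℕ, v ^ a ^ k = 1)
    (v₀ : K) (hv₀V : v₀ ∈ V) (hv₀ : v₀ ≠ 1)
    (m y : K) (hm : orderOf m = bG) (hy : y ∉ Subgroup.zpowers m)
    (s : ℕ) (hyc : y ^ cG = 1) (hconj : y * m = m ^ s * y)
    (hec : bG ∣ ∑ t ∈ Finset.range cG, s ^ t)
    (hej : ∀ j, 0 < j → j < cG → ¬ (bG ∣ ∑ t ∈ Finset.range j, s ^ t))
    (hno_ab : ¬∃ g : K, orderOf g = a * bG)
    (hno_ac : ¬∃ g : K, orderOf g = a * cG) : False := by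
  letI : CommGroup ↥V :=
    { (inferInstance : Group ↥V) with
      mul_comm := fun x y => Subtype.ext (hVcomm x x.2 y y.2) }
  set ρ : K → ↥V → ↥V := fun g v => ⟨g * ↑v * g⁻¹, hnorm.conj_mem _ v.2 g⟩ with hρ_def
  have hρ_mul : ∀ g h v, ρ g (ρ h v) = ρ (g * h) v := by
    intro g h v; apply Subtype.ext; simp [hρ_def]; group
  have hρ_one : ∀ v, ρ 1 v = v := by
    intro v; apply Subtype.ext; simp [hρ_def]
  have hρ_hom : ∀ g v w, ρ g (v * w) = ρ g v * ρ g w := by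
    intro g v w; apply Subtype.ext; simp [hρ_def]
  -- fixed-point-freeness from absence of mixed orders
  have hfpf : ∀ (g : K) (t : ℕ) (l : ℕ), t.Prime → a ≠ t → g ≠ 1 → g ^ t ^ l = 1 →
      (¬∃ x : K, orderOf x = a * t) → ∀ v : ↥V, ρ g v = v → v = 1 := by
    intro g t l htp hat hg1 hgl hno v hfix
    by_contra hv1
    have hvV : (v : K) ∈ V := v.2
    have hvne : (v : K) ≠ 1 := fun h => hv1 (Subtype.ext h)
    obtain ⟨k, hk⟩ := hVtor v hvV
    have hcomm : Commute (v : K) g := by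
      have h := congrArg Subtype.val hfix
      simp only [hρ_def] at h
      have : g * (v : K) = (v : K) * g := by
        conv_rhs => rw [← h]
        group
      exact this.symm
    exact hno (exists_orderOf_eq_mul_of_commute ha htp hat hvne hg1 hk hgl hcomm)
  have hm1 : m ≠ 1 := by
    intro h; rw [h, orderOf_one] at hm; exact hb.one_lt.ne' hm.symm
  have hmpow : m ^ bG ^ 1 = 1 := by rw [pow_one, ← hm]; exact pow_orderOf_eq_one m
  have hz1 : ∀ i : ℕ, m ^ i * y ≠ 1 := by
    intro i h
    apply hy
    rw [eq_inv_of_mul_eq_one_right h]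
    exact Subgroup.inv_mem _ (Subgroup.pow_mem _ (Subgroup.mem_zpowers m) i)
  have hzpow : ∀ i : ℕ, (m ^ i * y) ^ cG ^ 1 = 1 := by
    intro i
    rw [pow_one, conj_pow_formula m y s hconj i cG, hyc, mul_one]
    exact orderOf_dvd_iff_pow_eq_one.mp (by rw [hm]; exact hec.mul_left i)
  have hv : (⟨v₀, hv₀V⟩ : ↥V) ^ bG = 1 :=
    grand_product ρ hρ_mul hρ_one hρ_hom bG hb m y hm cG s hcp.pos hyc hconj hec hej
      (fun v => hfpf m bG 1 hb hab hm1 hmpow hno_ab v)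
      (fun i v => hfpf (m ^ i * y) cG 1 hcp hac (hz1 i) (hzpow i) hno_ac v)
      ⟨v₀, hv₀V⟩
  have hvb : v₀ ^ bG = 1 := by
    have := congrArg Subtype.val hv
    simpa using this
  obtain ⟨k, hk⟩ := hVtor v₀ hv₀V
  have h1 : orderOf v₀ ∣ bG := orderOf_dvd_of_pow_eq_one hvb
  have h2 : orderOf v₀ ∣ a ^ k := orderOf_dvd_of_pow_eq_one hk
  rcases (Nat.dvd_prime hb).mp h1 with h | h
  · exact hv₀ (orderOf_eq_one_iff.mp h)
  · have : bG ∣ a ^ k := h ▸ h2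
    have : bG = a := (Nat.prime_dvd_prime_iff_eq hb ha).mp (hb.dvd_of_dvd_pow this)
    exact hab this.symm

/-- Step F: given an elementary abelian `b`-subgroup `Ω` normalized by a subgroup `W`
whose order is divisible by `c`, together with the fixed-point data on `V`, get a
contradiction. -/
lemma lemma_F {K : Type} [Group K] [Fintype K] (a b c : ℕ)
    (ha : a.Prime) (hb : b.Prime) (hc : c.Prime)
    (hab : a ≠ b) (hac : a ≠ c) (hbc : b ≠ c)
    (V : Subgroup K) (hVnorm : V.Normal)
    (hVcomm : ∀ x ∈ V, ∀ y ∈ V, x * y = y * x)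
    (hVtor : ∀ v ∈ V, ∃ k : ℕ, v ^ a ^ k = 1)
    (v₀ : K) (hv₀V : v₀ ∈ V) (hv₀ : v₀ ≠ 1)
    (Ω : Subgroup K) (hΩcomm : ∀ x ∈ Ω, ∀ y ∈ Ω, x * y = y * x)
    (hΩexp : ∀ x ∈ Ω, x ^ b = 1)
    (x₁ : K) (hx₁Ω : x₁ ∈ Ω) (hx₁ : x₁ ≠ 1)
    (W : Subgroup K) (hWnorm : ∀ w ∈ W, ∀ x ∈ Ω, w * x * w⁻¹ ∈ Ω) (hcW : c ∣ Nat.card W)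
    (hno_ab : ¬∃ g : K, orderOf g = a * b) (hno_ac : ¬∃ g : K, orderOf g = a * c)
    (hno_bc : ¬∃ g : K, orderOf g = b * c) : False := by
  have hx₁b : x₁ ^ b = 1 := hΩexp x₁ hx₁Ω
  have hx₁ord : orderOf x₁ = b := by
    rcases (Nat.dvd_prime hb).mp (orderOf_dvd_of_pow_eq_one hx₁b) with h | h
    · exact absurd (orderOf_eq_one_iff.mp h) hx₁
    · exact h
  have hfin : IsOfFinOrder x₁ := isOfFinOrder_iff_pow_eq_one.mpr ⟨b, hb.pos, hx₁b⟩
  by_cases hcase : ∀ x ∈ Ω, x ∈ Subgroup.zpowers x₁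
  · -- Ω is cyclic of order b; get y of order c in W
    haveI := Fact.mk hc
    obtain ⟨yW, hyW⟩ := exists_prime_orderOf_dvd_card' (G := W) c hcW
    set y : K := (yW : K) with hy_def
    have hyord : orderOf y = c := by
      rw [hy_def, ← hyW]
      exact orderOf_injective W.subtype W.subtype_injective yW
    have hyc : y ^ c = 1 := by rw [← hyord]; exact pow_orderOf_eq_one y
    have hy1 : y ≠ 1 := by
      intro h; rw [h, orderOf_one] at hyord; exact hc.one_lt.ne' hyord.symm
    have hconjmem : y * x₁ * y⁻¹ ∈ Subgroup.zpowers x₁ :=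
      hcase _ (hWnorm y yW.2 x₁ hx₁Ω)
    obtain ⟨s, hs⟩ : ∃ s : ℕ, x₁ ^ s = y * x₁ * y⁻¹ :=
      hfin.mem_powers_iff_mem_zpowers.mpr hconjmem
    have hconjy : y * x₁ = x₁ ^ s * y := by rw [hs]; group
    by_cases hcomm : Commute x₁ y
    · exact hno_bc (exists_orderOf_eq_mul_of_commute hb hc hbc hx₁ hy1
        (by rw [pow_one]; exact hx₁b) (by rw [pow_one]; exact hyc) hcomm)
    · have hynotin : y ∉ Subgroup.zpowers x₁ := by
        intro hmem
        obtain ⟨t, ht⟩ := hfin.mem_powers_iff_mem_zpowers.mpr hmem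
        exact hcomm (ht ▸ ((Commute.refl x₁).pow_right t))
      -- s^c ≡ 1 mod b, s ≢ 1 mod b
      have hpowc : x₁ ^ (s ^ c) = x₁ ^ 1 := by
        have h1 : y ^ c * x₁ ^ 1 = x₁ ^ (1 * s ^ c) * y ^ c := conj_pow_comm x₁ y s hconjy c 1
        rw [hyc, pow_one, one_mul, Nat.one_mul, mul_one] at h1
        rw [pow_one, ← h1]
      have hmodc : s ^ c ≡ 1 [MOD b] := by
        have := pow_eq_pow_iff_modEq.mp hpowc
        rwa [hx₁ord] at this
      have hmod1 : ¬ s ≡ 1 [MOD b] := by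
        intro hmod
        apply hcomm
        have : x₁ ^ s = x₁ ^ 1 := pow_eq_pow_iff_modEq.mpr (by rwa [hx₁ord])
        rw [pow_one] at this
        have h4 : y * x₁ * y⁻¹ = x₁ := by rw [← hs, this]
        have h3 : y * x₁ = x₁ * y := by
          conv_lhs => rw [show y * x₁ = y * x₁ * y⁻¹ * y by group, h4]
        exact h3.symm
      haveI := Fact.mk hb
      set σ : ZMod b := ((s : ℕ) : ZMod b) with hσ
      have hσc : σ ^ c = 1 := by
        have h := (ZMod.natCast_eq_natCast_iff _ _ _).mpr hmodc
        push_cast at h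
        exact h
      have hσ1 : σ ≠ 1 := by
        intro h
        apply hmod1
        have h' : ((s : ℕ) : ZMod b) = ((1 : ℕ) : ZMod b) := by push_cast; exact h
        exact (ZMod.natCast_eq_natCast_iff _ _ _).mp h'
      have hgeom : ∀ j : ℕ, ((∑ t ∈ Finset.range j, s ^ t : ℕ) : ZMod b)
          = ∑ t ∈ Finset.range j, σ ^ t := by
        intro j; push_cast; rfl
      have hec : b ∣ ∑ t ∈ Finset.range c, s ^ t := by
        rw [← ZMod.natCast_eq_zero_iff, hgeom]
        have h2 : (∑ t ∈ Finset.range c, σ ^ t) * (σ - 1) = σ ^ c - 1 := geom_sum_mul σ c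
        rw [hσc, sub_self] at h2
        rcases mul_eq_zero.mp h2 with h | h
        · exact h
        · exact absurd (sub_eq_zero.mp h) hσ1
      have hej : ∀ j, 0 < j → j < c → ¬ (b ∣ ∑ t ∈ Finset.range j, s ^ t) := by
        intro j hj1 hj2 hdvd
        rw [← ZMod.natCast_eq_zero_iff, hgeom] at hdvd
        have h2 : σ ^ j - 1 = 0 := by
          rw [← geom_sum_mul σ j, hdvd, zero_mul]
        have h3 : σ ^ j = 1 := by rwa [sub_eq_zero] at h2
        have h4 : orderOf σ ∣ j := orderOf_dvd_of_pow_eq_one h3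
        have h5 : orderOf σ ∣ c := orderOf_dvd_of_pow_eq_one hσc
        have h6 : orderOf σ ≠ 1 := fun h => hσ1 (orderOf_eq_one_iff.mp h)
        rcases (Nat.dvd_prime hc).mp h5 with h | h
        · exact h6 h
        · rw [h] at h4
          exact absurd (Nat.le_of_dvd hj1 h4) (not_le.mpr hj2)
      exact grand_apply a b c ha hb hc hab hac V hVnorm hVcomm hVtor v₀ hv₀V hv₀
        x₁ y hx₁ord hynotin s hyc hconjy hec hej hno_ab hno_ac
  · push_neg at hcase
    obtain ⟨x₂, hx₂Ω, hx₂⟩ := hcase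
    have hx₂b : x₂ ^ b = 1 := hΩexp x₂ hx₂Ω
    have hconj2 : x₂ * x₁ = x₁ ^ 1 * x₂ := by
      rw [pow_one]
      exact hΩcomm x₂ hx₂Ω x₁ hx₁Ω
    have hec : b ∣ ∑ t ∈ Finset.range b, (1 : ℕ) ^ t := by simp
    have hej : ∀ j, 0 < j → j < b → ¬ (b ∣ ∑ t ∈ Finset.range j, (1 : ℕ) ^ t) := by
      intro j hj1 hj2 hdvd
      simp only [one_pow, Finset.sum_const, Finset.card_range, smul_eq_mul, mul_one] at hdvd
      exact absurd (Nat.le_of_dvd hj1 hdvd) (not_le.mpr hj2)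
    exact grand_apply a b b ha hb hb hab hab V hVnorm hVcomm hVtor v₀ hv₀V hv₀
      x₁ x₂ hx₁ord hx₂ 1 hx₂b hconj2 hec hej hno_ab hno_ab


/-- The subgroup of elements of `T` killed by `u`. -/
def expPart {K : Type*} [Group K] (T : Subgroup K) (hT : ∀ x ∈ T, ∀ y ∈ T, x * y = y * x)
    (u : ℕ) : Subgroup K where
  carrier := {x | x ∈ T ∧ x ^ u = 1}
  one_mem' := ⟨T.one_mem, one_pow u⟩
  mul_mem' := by
    rintro x y ⟨hx, hxu⟩ ⟨hy, hyu⟩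
    refine ⟨T.mul_mem hx hy, ?_⟩
    rw [(show Commute x y from hT x hx y hy).mul_pow, hxu, hyu, one_mul]
  inv_mem' := by
    rintro x ⟨hx, hxu⟩
    exact ⟨T.inv_mem hx, by rw [inv_pow, hxu, inv_one]⟩

lemma conj_pow_eq {K : Type*} [Group K] (g x : K) (n : ℕ) :
    (g * x * g⁻¹) ^ n = g * x ^ n * g⁻¹ := by
  induction n with
  | zero => simp
  | succ n ih => rw [pow_succ, ih, pow_succ]; group

lemma expPart_normal {K : Type*} [Group K] (T : Subgroup K) [hn : T.Normal]
    (hT : ∀ x ∈ T, ∀ y ∈ T, x * y = y * x) (u : ℕ) : (expPart T hT u).Normal := by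
  constructor
  rintro x ⟨hx, hxu⟩ g
  exact ⟨hn.conj_mem x hx g, by rw [conj_pow_eq, hxu, mul_one, mul_inv_cancel]⟩

lemma one_lt_card_of_ne_bot {K : Type*} [Group K] [Finite K] {H : Subgroup K} (h : H ≠ ⊥) :
    1 < Nat.card H := by
  have hpos : 0 < Nat.card H := Nat.card_pos
  by_contra hle
  push_neg at hle
  have h1 : Nat.card H = 1 := le_antisymm hle hpos
  exact h ((Subgroup.eq_bot_iff_card (H := H)).mpr h1)

lemma top_ne_bot_of_one_lt {K : Type*} [Group K] (h : 1 < Nat.card K) :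
    (⊤ : Subgroup K) ≠ ⊥ := by
  intro he
  have h2 : ∀ x : K, x = 1 := fun x => by
    have : x ∈ (⊥ : Subgroup K) := he ▸ Subgroup.mem_top x
    simpa using this
  have : Nat.card K = 1 := Nat.card_eq_one_iff_exists.mpr ⟨1, fun x => (h2 x).symm ▸ rfl⟩
  omega

/-- Step E: in a solvable group with `b` and `c` dividing the order, no mixed orders, and a
nontrivial normal abelian `a`-torsion subgroup `V`, we reach a contradiction. -/
lemma lemma_E {K : Type} [Group K] [Fintype K] [Group.IsSolvable K] (a b c : ℕ)
    (ha : a.Prime) (hb : b.Prime) (hc : c.Prime)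
    (hab : a ≠ b) (hac : a ≠ c) (hbc : b ≠ c)
    (hbK : b ∣ Nat.card K) (hcK : c ∣ Nat.card K)
    (V : Subgroup K) (hVnorm : V.Normal)
    (hVcomm : ∀ x ∈ V, ∀ y ∈ V, x * y = y * x)
    (hVtor : ∀ v ∈ V, ∃ k : ℕ, v ^ a ^ k = 1)
    (v₀ : K) (hv₀V : v₀ ∈ V) (hv₀ : v₀ ≠ 1)
    (hno_ab : ¬∃ g : K, orderOf g = a * b) (hno_ac : ¬∃ g : K, orderOf g = a * c)
    (hno_bc : ¬∃ g : K, orderOf g = b * c) : False := by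
  obtain ⟨W, hW1, hW2⟩ := hall_solvable (fun t => t = b ∨ t = c) (Nat.card K) K
    inferInstance inferInstance inferInstance rfl
  have hmulW : Nat.card W * W.index = Nat.card K := Subgroup.card_mul_index W
  have hbW : b ∣ Nat.card W := by
    rcases (Nat.Prime.dvd_mul hb).mp (hmulW ▸ hbK) with h | h
    · exact h
    · exact absurd h (hW2 b hb (Or.inl rfl))
  have hcW : c ∣ Nat.card W := by
    rcases (Nat.Prime.dvd_mul hc).mp (hmulW ▸ hcK) with h | h
    · exact h
    · exact absurd h (hW2 c hc (Or.inr rfl))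
  have hWcard : 1 < Nat.card ↥W := lt_of_lt_of_le hb.one_lt (Nat.le_of_dvd Nat.card_pos hbW)
  obtain ⟨B, hBnorm, hBbot, hBcomm⟩ := exists_abelian_normal (K := ↥W)
    (top_ne_bot_of_one_lt hWcard)
  haveI := hBnorm
  have hB1 : 1 < Nat.card B := one_lt_card_of_ne_bot hBbot
  set u := (Nat.card B).minFac with hu_def
  have hu : u.Prime := Nat.minFac_prime (by omega)
  have huW : u ∣ Nat.card ↥W :=
    dvd_trans (Nat.minFac_dvd _) (Subgroup.card_subgroup_dvd_card B)
  have hubc : u = b ∨ u = c := hW1 u hu huW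
  haveI : Fintype ↥W := Fintype.ofFinite _
  set T := torsionPart B hBcomm u with hT_def
  haveI hTnorm : T.Normal := torsionPart_normal B hBcomm u
  have hTbot : T ≠ ⊥ := torsionPart_ne_bot B hBcomm hu (Nat.minFac_dvd _)
  have hTcomm : ∀ x ∈ T, ∀ y ∈ T, x * y = y * x := fun x hx y hy =>
    hBcomm x hx.1 y hy.1
  set E := expPart T hTcomm u with hE_def
  haveI hEnorm : E.Normal := expPart_normal T hTcomm u
  -- E is nontrivial
  obtain ⟨z, hzE, hz1⟩ : ∃ z : ↥W, z ∈ E ∧ z ≠ 1 := by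
    obtain ⟨x, hxT, hx1⟩ : ∃ x : ↥W, x ∈ T ∧ x ≠ 1 := by
      by_contra hcon
      push_neg at hcon
      exact hTbot ((Subgroup.eq_bot_iff_forall T).mpr hcon)
    obtain ⟨k, hk⟩ := hxT.2
    obtain ⟨n, hn⟩ := exists_pow_orderOf_eq_prime hu hx1 hk
    refine ⟨x ^ n, ⟨T.pow_mem hxT n, ?_⟩, ?_⟩
    · rw [← hn]; exact pow_orderOf_eq_one _
    · intro h; rw [h, orderOf_one] at hn; exact hu.one_lt.ne' hn.symm
  set Ω : Subgroup K := E.map W.subtype with hΩ_def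
  have hΩcomm : ∀ x ∈ Ω, ∀ y ∈ Ω, x * y = y * x := by
    rintro x hx y hy
    obtain ⟨x', hx', rfl⟩ := Subgroup.mem_map.mp hx
    obtain ⟨y', hy', rfl⟩ := Subgroup.mem_map.mp hy
    have := hTcomm x' hx'.1 y' hy'.1
    exact congrArg W.subtype this
  have hΩexp : ∀ x ∈ Ω, x ^ u = 1 := by
    rintro x hx
    obtain ⟨x', hx', rfl⟩ := Subgroup.mem_map.mp hx
    have : W.subtype (x' ^ u) = W.subtype 1 := congrArg W.subtype hx'.2
    simpa using this
  have hx₁Ω : (z : K) ∈ Ω := Subgroup.mem_map.mpr ⟨z, hzE, rfl⟩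
  have hx₁1 : (z : K) ≠ 1 := by
    intro h
    exact hz1 (Subtype.ext (by simpa using h))
  have hWnorm : ∀ w ∈ W, ∀ x ∈ Ω, w * x * w⁻¹ ∈ Ω := by
    intro w hw x hx
    obtain ⟨x', hx', rfl⟩ := Subgroup.mem_map.mp hx
    refine Subgroup.mem_map.mpr ⟨(⟨w, hw⟩ : ↥W) * x' * (⟨w, hw⟩ : ↥W)⁻¹,
      hEnorm.conj_mem x' hx' _, rfl⟩
  rcases hubc with h | h
  · exact lemma_F a b c ha hb hc hab hac hbc V hVnorm hVcomm hVtor v₀ hv₀V hv₀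
      Ω hΩcomm (h ▸ hΩexp) (z : K) hx₁Ω hx₁1 W hWnorm hcW hno_ab hno_ac hno_bc
  · exact lemma_F a c b ha hc hb hac hab (Ne.symm hbc) V hVnorm hVcomm hVtor v₀ hv₀V hv₀
      Ω hΩcomm (h ▸ hΩexp) (z : K) hx₁Ω hx₁1 W hWnorm hbW hno_ac hno_ab
      (by rw [mul_comm c b]; exact hno_bc)

/-- Step D: a finite solvable group whose order is divisible by each of three distinct
primes, only involves these primes, and has no elements of mixed order, cannot exist. -/
lemma lemma_D {K : Type} [Group K] [Fintype K] [Group.IsSolvable K] (p q r : ℕ)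
    (hp : p.Prime) (hq : q.Prime) (hr : r.Prime)
    (hpq : p ≠ q) (hpr : p ≠ r) (hqr : q ≠ r)
    (hpK : p ∣ Nat.card K) (hqK : q ∣ Nat.card K) (hrK : r ∣ Nat.card K)
    (hπ : ∀ t : ℕ, t.Prime → t ∣ Nat.card K → t = p ∨ t = q ∨ t = r)
    (hno_pq : ¬∃ g : K, orderOf g = p * q) (hno_pr : ¬∃ g : K, orderOf g = p * r)
    (hno_qr : ¬∃ g : K, orderOf g = q * r) : False := by
  have hKnt : (⊤ : Subgroup K) ≠ ⊥ := top_ne_bot_of_one_lt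
    (lt_of_lt_of_le hp.one_lt (Nat.le_of_dvd Nat.card_pos hpK))
  obtain ⟨A, hAnorm, hAbot, hAcomm⟩ := exists_abelian_normal hKnt
  haveI := hAnorm
  have hA1 : 1 < Nat.card A := one_lt_card_of_ne_bot hAbot
  obtain ⟨u, hu, huA⟩ : ∃ u : ℕ, u.Prime ∧ u ∣ Nat.card A :=
    ⟨(Nat.card A).minFac, Nat.minFac_prime (by omega), Nat.minFac_dvd _⟩
  have huK : u ∣ Nat.card K := dvd_trans huA (Subgroup.card_subgroup_dvd_card A)
  set V := torsionPart A hAcomm u with hV_def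
  haveI hVnorm : V.Normal := torsionPart_normal A hAcomm u
  have hVbot : V ≠ ⊥ := torsionPart_ne_bot A hAcomm hu huA
  have hVcomm : ∀ x ∈ V, ∀ y ∈ V, x * y = y * x := fun x hx y hy => hAcomm x hx.1 y hy.1
  have hVtor : ∀ v ∈ V, ∃ k : ℕ, v ^ u ^ k = 1 := fun v hv => hv.2
  obtain ⟨v₀, hv₀V, hv₀⟩ : ∃ v₀ : K, v₀ ∈ V ∧ v₀ ≠ 1 := by
    by_contra hcon
    push_neg at hcon
    exact hVbot ((Subgroup.eq_bot_iff_forall V).mpr hcon)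
  rcases hπ u hu huK with h | h | h
  · exact lemma_E p q r hp hq hr hpq hpr hqr hqK hrK V hVnorm hVcomm (h ▸ hVtor)
      v₀ hv₀V hv₀ hno_pq hno_pr hno_qr
  · exact lemma_E q p r hq hp hr (Ne.symm hpq) hqr hpr hpK hrK V hVnorm hVcomm (h ▸ hVtor)
      v₀ hv₀V hv₀ (by rw [mul_comm q p]; exact hno_pq) hno_qr hno_pr
  · exact lemma_E r p q hr hp hq (Ne.symm hpr) (Ne.symm hqr) hpq hpK hqK V hVnorm hVcomm
      (h ▸ hVtor) v₀ hv₀V hv₀ (by rw [mul_comm r p]; exact hno_pr)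
      (by rw [mul_comm r q]; exact hno_qr) hno_pq

/-- If the Gruenberg–Kegel graph of a finite group `G` contains a coclique of size 3
(three pairwise distinct primes dividing `|G|` such that `G` has no element of order
the product of any two of them), then `G` is not solvable. -/
theorem not_solvable_of_three_coclique
    (G : Type) [Group G] [Fintype G]
    (h : ∃ p q r : ℕ, p.Prime ∧ q.Prime ∧ r.Prime ∧ p ≠ q ∧ p ≠ r ∧ q ≠ r ∧
      p ∣ Fintype.card G ∧ q ∣ Fintype.card G ∧ r ∣ Fintype.card G ∧
      (¬ ∃ g : G, orderOf g = p * q) ∧ (¬ ∃ g : G, orderOf g = p * r) ∧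
      (¬ ∃ g : G, orderOf g = q * r)) :
    ¬ IsSolvable G := by
  intro hsolv
  haveI : Group.IsSolvable G := hsolv
  obtain ⟨p, q, r, hp, hq, hr, hpq, hpr, hqr, hpG, hqG, hrG, hno_pq, hno_pr, hno_qr⟩ := h
  rw [← Nat.card_eq_fintype_card] at hpG hqG hrG
  obtain ⟨H, hH1, hH2⟩ := hall_solvable (fun t => t = p ∨ t = q ∨ t = r) (Nat.card G) G
    inferInstance inferInstance hsolv rfl
  have hmulH : Nat.card H * H.index = Nat.card G := Subgroup.card_mul_index H
  have hpH : p ∣ Nat.card H := by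
    rcases (Nat.Prime.dvd_mul hp).mp (hmulH ▸ hpG) with h | h
    · exact h
    · exact absurd h (hH2 p hp (Or.inl rfl))
  have hqH : q ∣ Nat.card H := by
    rcases (Nat.Prime.dvd_mul hq).mp (hmulH ▸ hqG) with h | h
    · exact h
    · exact absurd h (hH2 q hq (Or.inr (Or.inl rfl)))
  have hrH : r ∣ Nat.card H := by
    rcases (Nat.Prime.dvd_mul hr).mp (hmulH ▸ hrG) with h | h
    · exact h
    · exact absurd h (hH2 r hr (Or.inr (Or.inr rfl)))
  haveI : Fintype ↥H := Fintype.ofFinite _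
  have transfer : ∀ (n : ℕ), (¬∃ g : G, orderOf g = n) → ¬∃ g : ↥H, orderOf g = n := by
    rintro n hno ⟨g, hg⟩
    exact hno ⟨(g : G), by rw [← hg]; exact orderOf_injective H.subtype H.subtype_injective g⟩
  exact lemma_D p q r hp hq hr hpq hpr hqr hpH hqH hrH
    (fun t ht htH => hH1 t ht htH)
    (transfer _ hno_pq) (transfer _ hno_pr) (transfer _ hno_qr)
end
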